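/- If a 2-part 2-design is c-partitionable, then b ≥ v1 + v2 + c - 2. -/
import Mathlib
open Finset

private lemma dot_ind {n : ℕ} (P Q : Fin n → Prop) [DecidablePred P] [DecidablePred Q] :
    ∑ i, (if P i then (1:ℝ) else 0) * (if Q i then 1 else 0)
      = ((univ.filter fun i => P i ∧ Q i).card : ℝ) := by
  rw [← Finset.sum_boole]
  apply Finset.sum_congr rfl
  intro i _
  by_cases h1 : P i <;> by_cases h2 : Q i <;> simp [h1, h2]

private lemma zero_of_rel {ι : Type*} [Fintype ι] (a : ι → ℝ) (α β : ℝ)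
    (hα : 0 < α) (hβ : 0 ≤ β)
    (h : ∀ y, β * (∑ x, a x) + α * a y = 0) : ∀ y, a y = 0 := by
  set t := ∑ x, a x with ht
  have hsum : (Fintype.card ι : ℝ) * (β * t) + α * t = 0 := by
    have h1 : ∑ y : ι, (β * t + α * a y) = 0 := Finset.sum_eq_zero fun y _ => h y
    rw [Finset.sum_add_distrib, Finset.sum_const, ← Finset.mul_sum] at h1
    simpa [Finset.card_univ, nsmul_eq_mul, ← ht] using h1
  have ht0 : t = 0 := by
    have hpos : 0 < (Fintype.card ι : ℝ) * β + α := by positivity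
    have : ((Fintype.card ι : ℝ) * β + α) * t = 0 := by ring_nf; ring_nf at hsum; linarith
    exact (mul_eq_zero.mp this).resolve_left (ne_of_gt hpos)
  intro y
  have h2 := h y
  rw [ht0] at h2
  have : α * a y = 0 := by linarith
  exact (mul_eq_zero.mp this).resolve_left (ne_of_gt hα)

private lemma dot_rel {n : ℕ} {ι : Type*} [Fintype ι] (V : ι → Fin n → ℝ) (a : ι → ℝ)
    (h : ∑ i, a i • V i = 0) (w : Fin n → ℝ) :
    ∑ i, a i * (∑ t, V i t * w t) = 0 := by
  have h0 : ∀ t, ∑ i, a i * V i t = 0 := by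
    intro t
    have := congrFun h t
    simpa [Finset.sum_apply] using this
  calc ∑ i, a i * (∑ t, V i t * w t)
      = ∑ i, ∑ t, (a i * V i t) * w t := by
        apply Finset.sum_congr rfl; intro i _; rw [Finset.mul_sum]; ring_nf
    _ = ∑ t, (∑ i, a i * V i t) * w t := by
        rw [Finset.sum_comm]
        exact Finset.sum_congr rfl fun t _ => (Finset.sum_mul _ _ _).symm
    _ = 0 := by simp [h0]

-- counting lemma: (filter P).card * k2 = ∑ y, (filter (P ∧ y ∈ T ·)).card
private lemma count_mul {n m : ℕ} (T : Fin n → Finset (Fin m)) (k : ℕ)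
    (hT : ∀ i, (T i).card = k) (P : Fin n → Prop) [DecidablePred P] :
    (univ.filter P).card * k = ∑ y : Fin m, (univ.filter fun i => P i ∧ y ∈ T i).card := by
  have : ∀ y : Fin m, (univ.filter fun i => P i ∧ y ∈ T i).card
      = ∑ i : Fin n, if P i ∧ y ∈ T i then 1 else 0 := fun y => Finset.card_filter _ _
  simp_rw [this]
  rw [Finset.sum_comm]
  have inner : ∀ i : Fin n, (∑ y : Fin m, if P i ∧ y ∈ T i then 1 else 0) = if P i then k else 0 := by
    intro i
    by_cases hp : P i
    · simp only [hp, true_and, if_true]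
      rw [← hT i, ← Finset.card_filter]
      congr 1
      simp [Finset.filter_univ_mem]
    · simp [hp]
  simp_rw [inner]
  rw [← Finset.sum_filter, Finset.sum_const, smul_eq_mul, mul_comm]

private lemma dot_subl {n : ℕ} (A B C : Fin n → ℝ) :
    ∑ t, (A - B) t * C t = (∑ t, A t * C t) - ∑ t, B t * C t := by
  have : ∀ t : Fin n, (A - B) t * C t = A t * C t - B t * C t := fun t => by
    simp [Pi.sub_apply]; ring
  simp_rw [this, Finset.sum_sub_distrib]

private lemma dot_subr {n : ℕ} (A C D : Fin n → ℝ) :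
    ∑ t, A t * (C - D) t = (∑ t, A t * C t) - ∑ t, A t * D t := by
  have : ∀ t : Fin n, A t * (C - D) t = A t * C t - A t * D t := fun t => by
    simp [Pi.sub_apply]; ring
  simp_rw [this, Finset.sum_sub_distrib]

private lemma dot_sub {n : ℕ} (A B C D : Fin n → ℝ) :
    ∑ t, (A - B) t * (C - D) t =
      (∑ t, A t * C t) - (∑ t, A t * D t) - ((∑ t, B t * C t) - ∑ t, B t * D t) := by
  have : ∀ t : Fin n, (A - B) t * (C - D) t =
      (A t * C t - A t * D t) - (B t * C t - B t * D t) := fun t => by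
    simp [Pi.sub_apply]; ring
  simp_rw [this, Finset.sum_sub_distrib]

private def indP {n : ℕ} (P : Fin n → Prop) [DecidablePred P] : Fin n → ℝ :=
  fun i => if P i then 1 else 0

private lemma dot_indP {n : ℕ} (P Q : Fin n → Prop) [DecidablePred P] [DecidablePred Q] :
    ∑ i, indP P i * indP Q i = ((univ.filter fun i => P i ∧ Q i).card : ℝ) := by
  simpa [indP] using dot_ind P Q

set_option maxHeartbeats 2000000 in
/-- If a 2-part 2-design is c-partitionable, then b ≥ v1 + v2 + c - 2. -/
theorem two_part_partitionable_bound
    (v1 v2 b k1 k2 l11 l22 l12 : ℕ)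
    (S : Fin b → Finset (Fin v1)) (T : Fin b → Finset (Fin v2))
    (hS : ∀ i, (S i).card = k1) (hT : ∀ i, (T i).card = k2)
    (hk1 : 1 < k1) (hk1v : k1 < v1) (hk2 : 1 < k2) (hk2v : k2 < v2)
    (hl11 : 0 < l11) (hl22 : 0 < l22)
    (h11 : ∀ x y : Fin v1, x ≠ y →
      (Finset.univ.filter (fun i => x ∈ S i ∧ y ∈ S i)).card = l11)
    (h22 : ∀ x y : Fin v2, x ≠ y →
      (Finset.univ.filter (fun i => x ∈ T i ∧ y ∈ T i)).card = l22)
    (h12 : ∀ (x : Fin v1) (y : Fin v2),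
      (Finset.univ.filter (fun i => x ∈ S i ∧ y ∈ T i)).card = l12)
    (c : ℕ) (hc : 0 < c) (part : Fin b → Fin c)
    (hsize : ∀ j : Fin c, (Finset.univ.filter (fun i => part i = j)).card * c = b)
    (hCconst : ∀ (x : Fin v1) (j j' : Fin c),
      (Finset.univ.filter (fun i => x ∈ S i ∧ part i = j)).card =
      (Finset.univ.filter (fun i => x ∈ S i ∧ part i = j')).card)
    (hDconst : ∀ (y : Fin v2) (j j' : Fin c),
      (Finset.univ.filter (fun i => y ∈ T i ∧ part i = j)).card =
      (Finset.univ.filter (fun i => y ∈ T i ∧ part i = j')).card) :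
    b + 2 ≥ v1 + v2 + c := by
  have hv1 : 2 < v1 := by omega
  have hv2 : 2 < v2 := by omega
  set x0 : Fin v1 := ⟨0, by omega⟩ with hx0
  set x1 : Fin v1 := ⟨1, by omega⟩ with hx1
  set y0 : Fin v2 := ⟨0, by omega⟩ with hy0
  set y1 : Fin v2 := ⟨1, by omega⟩ with hy1
  set j0 : Fin c := ⟨0, hc⟩ with hj0
  have hx01 : x0 ≠ x1 := by simp [hx0, hx1, Fin.ext_iff]
  have hy01 : y0 ≠ y1 := by simp [hy0, hy1, Fin.ext_iff]
  -- replication numbers are constant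
  have hk1pos : 0 < k1 := by omega
  have hk2pos : 0 < k2 := by omega
  have hmul1 : ∀ x : Fin v1, (univ.filter fun i => x ∈ S i).card * k2 = v2 * l12 := by
    intro x
    rw [count_mul T k2 hT (fun i => x ∈ S i)]
    simp [h12, Finset.sum_const, Finset.card_univ, mul_comm]
  have h12' : ∀ (y : Fin v2) (x : Fin v1),
      (univ.filter fun i => y ∈ T i ∧ x ∈ S i).card = l12 := by
    intro y x
    rw [Finset.filter_congr (fun i _ => and_comm)]
    exact h12 x y
  have hmul2 : ∀ y : Fin v2, (univ.filter fun i => y ∈ T i).card * k1 = v1 * l12 := by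
    intro y
    rw [count_mul S k1 hS (fun i => y ∈ T i)]
    simp [h12', Finset.sum_const, Finset.card_univ, mul_comm]
  set R1 : ℕ := (univ.filter fun i => x0 ∈ S i).card with hR1def
  set R2 : ℕ := (univ.filter fun i => y0 ∈ T i).card with hR2def
  have hR1c : ∀ x : Fin v1, (univ.filter fun i => x ∈ S i).card = R1 := fun x =>
    Nat.eq_of_mul_eq_mul_right hk2pos ((hmul1 x).trans (hmul1 x0).symm)
  have hR2c : ∀ y : Fin v2, (univ.filter fun i => y ∈ T i).card = R2 := fun y =>
    Nat.eq_of_mul_eq_mul_right hk1pos ((hmul2 y).trans (hmul2 y0).symm)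
  -- R1 > l11
  have hgt1 : ∀ (v : ℕ) (W : Fin b → Finset (Fin v)) (kk ll : ℕ)
      (hW : ∀ i, (W i).card = kk) (hkv : kk < v) (hll : 0 < ll) (z0 z1 : Fin v) (hz : z0 ≠ z1)
      (hWp : ∀ x y : Fin v, x ≠ y → (univ.filter (fun i => x ∈ W i ∧ y ∈ W i)).card = ll)
      (RR : ℕ) (hRc : ∀ x : Fin v, (univ.filter fun i => x ∈ W i).card = RR), ll < RR := by
    intro v W kk ll hW hkv hll z0 z1 hz hWp RR hRc
    have hle : ll ≤ RR := by
      rw [← hWp z0 z1 hz, ← hRc z0]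
      apply Finset.card_le_card
      intro i hi
      simp only [Finset.mem_filter] at hi ⊢
      exact ⟨hi.1, hi.2.1⟩
    rcases lt_or_eq_of_le hle with h | h
    · exact h
    · exfalso
      have hkey : ∀ x : Fin v, z0 ≠ x →
          (univ.filter (fun i => z0 ∈ W i ∧ x ∈ W i)) = (univ.filter fun i => z0 ∈ W i) := by
        intro x hx
        apply Finset.eq_of_subset_of_card_le
        · intro i hi
          simp only [Finset.mem_filter] at hi ⊢
          exact ⟨hi.1, hi.2.1⟩
        · rw [hRc z0, hWp z0 x hx, h]
      have hne : (univ.filter fun i => z0 ∈ W i).Nonempty := by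
        rw [← Finset.card_pos, hRc z0, ← h]; exact hll
      obtain ⟨i0, hi0⟩ := hne
      simp only [Finset.mem_filter] at hi0
      have : W i0 = univ := by
        apply Finset.eq_univ_of_forall
        intro x
        by_cases hxz : z0 = x
        · exact hxz ▸ hi0.2
        · have := hkey x hxz
          have hmem : i0 ∈ univ.filter (fun i => z0 ∈ W i ∧ x ∈ W i) := by
            rw [this]; simp [hi0.2]
          simp only [Finset.mem_filter] at hmem
          exact hmem.2.2
      have hcard := hW i0
      rw [this, Finset.card_univ, Fintype.card_fin] at hcard
      omega
  have hlR1 : l11 < R1 := hgt1 v1 S k1 l11 hS hk1v hl11 x0 x1 hx01 h11 R1 hR1c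
  have hlR2 : l22 < R2 := hgt1 v2 T k2 l22 hT hk2v hl22 y0 y1 hy01 h22 R2 hR2c
  -- class sizes
  set M : ℕ := (univ.filter fun i => part i = j0).card with hMdef
  have hMc : ∀ j : Fin c, (univ.filter fun i => part i = j).card = M := fun j =>
    Nat.eq_of_mul_eq_mul_right hc ((hsize j).trans (hsize j0).symm)
  have hb : 0 < b := by
    have h := h11 x0 x1 hx01
    have h2 : (univ.filter fun i => x0 ∈ S i ∧ x1 ∈ S i).card ≤ b := by
      calc (univ.filter fun i => x0 ∈ S i ∧ x1 ∈ S i).card ≤ (univ : Finset (Fin b)).card :=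
            Finset.card_filter_le _ _
        _ = b := by simp
    omega
  have hMpos : 0 < M := by
    have := hsize j0
    rw [← hMdef] at this
    by_contra h
    push_neg at h
    interval_cases M <;> omega
  -- the diagonal dot products
  have dSS : ∀ x x' : Fin v1, (∑ t, indP (fun i => x ∈ S i) t * indP (fun i => x' ∈ S i) t)
      = if x = x' then (R1 : ℝ) else (l11 : ℝ) := by
    intro x x'
    rw [dot_indP]
    by_cases h : x = x'
    · subst h
      rw [Finset.filter_congr (fun i _ => by tauto : ∀ i ∈ univ, (x ∈ S i ∧ x ∈ S i) ↔ x ∈ S i)]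
      rw [hR1c x]
      simp
    · rw [h11 x x' h]; simp [h]
  have dTT : ∀ y y' : Fin v2, (∑ t, indP (fun i => y ∈ T i) t * indP (fun i => y' ∈ T i) t)
      = if y = y' then (R2 : ℝ) else (l22 : ℝ) := by
    intro y y'
    rw [dot_indP]
    by_cases h : y = y'
    · subst h
      rw [Finset.filter_congr (fun i _ => by tauto : ∀ i ∈ univ, (y ∈ T i ∧ y ∈ T i) ↔ y ∈ T i)]
      rw [hR2c y]
      simp
    · rw [h22 y y' h]; simp [h]
  have dPP : ∀ j j' : Fin c, (∑ t, indP (fun i => part i = j) t * indP (fun i => part i = j') t)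
      = if j = j' then (M : ℝ) else 0 := by
    intro j j'
    rw [dot_indP]
    by_cases h : j = j'
    · subst h
      rw [Finset.filter_congr (fun i _ => by tauto : ∀ i ∈ univ, (part i = j ∧ part i = j) ↔ part i = j)]
      rw [hMc j]
      simp
    · have : (univ.filter fun i => part i = j ∧ part i = j') = ∅ := by
        apply Finset.filter_eq_empty_iff.mpr
        intro i _
        rintro ⟨h1, h2⟩
        exact h (h1 ▸ h2 ▸ rfl)
      rw [this]
      simp [h]
  have dST : ∀ (x : Fin v1) (y : Fin v2),
      (∑ t, indP (fun i => x ∈ S i) t * indP (fun i => y ∈ T i) t) = (l12 : ℝ) := by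
    intro x y; rw [dot_indP, h12 x y]
  have dTS : ∀ (y : Fin v2) (x : Fin v1),
      (∑ t, indP (fun i => y ∈ T i) t * indP (fun i => x ∈ S i) t) = (l12 : ℝ) := by
    intro y x; rw [dot_indP, h12' y x]
  have dSP : ∀ (x : Fin v1) (j : Fin c),
      (∑ t, indP (fun i => x ∈ S i) t * indP (fun i => part i = j) t)
      = ((univ.filter fun i => x ∈ S i ∧ part i = j).card : ℝ) := fun x j => dot_indP _ _
  have dPS : ∀ (j : Fin c) (x : Fin v1),
      (∑ t, indP (fun i => part i = j) t * indP (fun i => x ∈ S i) t)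
      = ((univ.filter fun i => x ∈ S i ∧ part i = j).card : ℝ) := by
    intro j x
    rw [dot_indP, Finset.filter_congr (fun i _ => and_comm)]
  have dTP : ∀ (y : Fin v2) (j : Fin c),
      (∑ t, indP (fun i => y ∈ T i) t * indP (fun i => part i = j) t)
      = ((univ.filter fun i => y ∈ T i ∧ part i = j).card : ℝ) := fun y j => dot_indP _ _
  have dPT : ∀ (j : Fin c) (y : Fin v2),
      (∑ t, indP (fun i => part i = j) t * indP (fun i => y ∈ T i) t)
      = ((univ.filter fun i => y ∈ T i ∧ part i = j).card : ℝ) := by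
    intro j y
    rw [dot_indP, Finset.filter_congr (fun i _ => and_comm)]
  -- the family of vectors
  have hli : LinearIndependent ℝ (Sum.elim (fun x : Fin v1 => indP (fun i => x ∈ S i))
      (Sum.elim
        (fun y : {y : Fin v2 // y ≠ y0} =>
          indP (fun i => y.1 ∈ T i) - indP (fun i => y0 ∈ T i))
        (fun j : {j : Fin c // j ≠ j0} =>
          indP (fun i => part i = j.1) - indP (fun i => part i = j0)))) := by
    rw [Fintype.linearIndependent_iff]
    intro a ha
    have key1 : ∀ x' : Fin v1, a (Sum.inl x') = 0 := by
      apply zero_of_rel (fun x => a (Sum.inl x)) ((R1 : ℝ) - l11) (l11 : ℝ)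
      · have : (l11 : ℝ) < R1 := by exact_mod_cast hlR1
        linarith
      · positivity
      intro x'
      have hrel := dot_rel _ a ha (indP (fun i => x' ∈ S i))
      rw [Fintype.sum_sum_type, Fintype.sum_sum_type] at hrel
      simp only [Sum.elim_inl, Sum.elim_inr] at hrel
      have eA : (∑ x : Fin v1, a (Sum.inl x) *
          (∑ t, indP (fun i => x ∈ S i) t * indP (fun i => x' ∈ S i) t))
          = (l11 : ℝ) * (∑ x : Fin v1, a (Sum.inl x)) + ((R1 : ℝ) - l11) * a (Sum.inl x') := by
        have hterm : ∀ x : Fin v1, a (Sum.inl x) *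
            (∑ t, indP (fun i => x ∈ S i) t * indP (fun i => x' ∈ S i) t)
            = (l11 : ℝ) * a (Sum.inl x)
              + (if x = x' then ((R1 : ℝ) - l11) * a (Sum.inl x) else 0) := by
          intro x
          rw [dSS]
          by_cases h : x = x' <;> simp [h] <;> ring
        simp_rw [hterm]
        rw [Finset.sum_add_distrib, ← Finset.mul_sum,
          Fintype.sum_ite_eq' x' (fun x => ((R1 : ℝ) - l11) * a (Sum.inl x))]
      have eB : (∑ y : {y : Fin v2 // y ≠ y0}, a (Sum.inr (Sum.inl y)) *
          (∑ t, (indP (fun i => y.1 ∈ T i) - indP (fun i => y0 ∈ T i)) t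
            * indP (fun i => x' ∈ S i) t)) = 0 := by
        apply Finset.sum_eq_zero
        intro y _
        rw [dot_subl, dTS, dTS, sub_self, mul_zero]
      have eC : (∑ j : {j : Fin c // j ≠ j0}, a (Sum.inr (Sum.inr j)) *
          (∑ t, (indP (fun i => part i = j.1) - indP (fun i => part i = j0)) t
            * indP (fun i => x' ∈ S i) t)) = 0 := by
        apply Finset.sum_eq_zero
        intro j _
        rw [dot_subl, dPS, dPS, hCconst x' j.1 j0, sub_self, mul_zero]
      rw [eA, eB, eC] at hrel
      linarith
    have key2 : ∀ y' : {y : Fin v2 // y ≠ y0}, a (Sum.inr (Sum.inl y')) = 0 := by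
      apply zero_of_rel (fun y => a (Sum.inr (Sum.inl y))) ((R2 : ℝ) - l22) ((R2 : ℝ) - l22)
      · have : (l22 : ℝ) < R2 := by exact_mod_cast hlR2
        linarith
      · have : (l22 : ℝ) < R2 := by exact_mod_cast hlR2
        linarith
      intro y'
      have hrel := dot_rel _ a ha (indP (fun i => y'.1 ∈ T i) - indP (fun i => y0 ∈ T i))
      rw [Fintype.sum_sum_type, Fintype.sum_sum_type] at hrel
      simp only [Sum.elim_inl, Sum.elim_inr] at hrel
      have eA : (∑ x : Fin v1, a (Sum.inl x) *
          (∑ t, indP (fun i => x ∈ S i) t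
            * (indP (fun i => y'.1 ∈ T i) - indP (fun i => y0 ∈ T i)) t)) = 0 := by
        apply Finset.sum_eq_zero
        intro x _
        rw [dot_subr, dST, dST, sub_self, mul_zero]
      have eB : (∑ y : {y : Fin v2 // y ≠ y0}, a (Sum.inr (Sum.inl y)) *
          (∑ t, (indP (fun i => y.1 ∈ T i) - indP (fun i => y0 ∈ T i)) t
            * (indP (fun i => y'.1 ∈ T i) - indP (fun i => y0 ∈ T i)) t))
          = ((R2 : ℝ) - l22) * (∑ y : {y : Fin v2 // y ≠ y0}, a (Sum.inr (Sum.inl y)))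
            + ((R2 : ℝ) - l22) * a (Sum.inr (Sum.inl y')) := by
        have hterm : ∀ y : {y : Fin v2 // y ≠ y0}, a (Sum.inr (Sum.inl y)) *
            (∑ t, (indP (fun i => y.1 ∈ T i) - indP (fun i => y0 ∈ T i)) t
              * (indP (fun i => y'.1 ∈ T i) - indP (fun i => y0 ∈ T i)) t)
            = ((R2 : ℝ) - l22) * a (Sum.inr (Sum.inl y))
              + (if y = y' then ((R2 : ℝ) - l22) * a (Sum.inr (Sum.inl y)) else 0) := by
          intro y
          rw [dot_sub, dTT, dTT, dTT, dTT]
          rw [if_neg (show ¬ ((y : Fin v2) = y0) from y.2),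
            if_neg (show ¬ (y0 = (y' : Fin v2)) from fun h => y'.2 h.symm),
            if_pos (show y0 = y0 from rfl)]
          by_cases h : y = y'
          · have h1 : y.1 = y'.1 := congrArg _ h
            rw [if_pos h1, if_pos h]
            ring
          · have h1 : y.1 ≠ y'.1 := fun hh => h (Subtype.ext hh)
            rw [if_neg h1, if_neg h]
            ring
        simp_rw [hterm]
        rw [Finset.sum_add_distrib, ← Finset.mul_sum,
          Fintype.sum_ite_eq' y' (fun y => ((R2 : ℝ) - l22) * a (Sum.inr (Sum.inl y)))]
      have eC : (∑ j : {j : Fin c // j ≠ j0}, a (Sum.inr (Sum.inr j)) *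
          (∑ t, (indP (fun i => part i = j.1) - indP (fun i => part i = j0)) t
            * (indP (fun i => y'.1 ∈ T i) - indP (fun i => y0 ∈ T i)) t)) = 0 := by
        apply Finset.sum_eq_zero
        intro j _
        rw [dot_sub, dPT, dPT, dPT, dPT, hDconst y'.1 j.1 j0, hDconst y0 j.1 j0]
        ring
      rw [eA, eB, eC] at hrel
      linarith
    have key3 : ∀ j' : {j : Fin c // j ≠ j0}, a (Sum.inr (Sum.inr j')) = 0 := by
      apply zero_of_rel (fun j => a (Sum.inr (Sum.inr j))) (M : ℝ) (M : ℝ)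
      · exact_mod_cast hMpos
      · positivity
      intro j'
      have hrel := dot_rel _ a ha (indP (fun i => part i = j'.1) - indP (fun i => part i = j0))
      rw [Fintype.sum_sum_type, Fintype.sum_sum_type] at hrel
      simp only [Sum.elim_inl, Sum.elim_inr] at hrel
      have eA : (∑ x : Fin v1, a (Sum.inl x) *
          (∑ t, indP (fun i => x ∈ S i) t
            * (indP (fun i => part i = j'.1) - indP (fun i => part i = j0)) t)) = 0 := by
        apply Finset.sum_eq_zero
        intro x _
        rw [dot_subr, dSP, dSP, hCconst x j'.1 j0, sub_self, mul_zero]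
      have eB : (∑ y : {y : Fin v2 // y ≠ y0}, a (Sum.inr (Sum.inl y)) *
          (∑ t, (indP (fun i => y.1 ∈ T i) - indP (fun i => y0 ∈ T i)) t
            * (indP (fun i => part i = j'.1) - indP (fun i => part i = j0)) t)) = 0 := by
        apply Finset.sum_eq_zero
        intro y _
        rw [dot_sub, dTP, dTP, dTP, dTP, hDconst y.1 j'.1 j0, hDconst y0 j'.1 j0]
        ring
      have eC : (∑ j : {j : Fin c // j ≠ j0}, a (Sum.inr (Sum.inr j)) *
          (∑ t, (indP (fun i => part i = j.1) - indP (fun i => part i = j0)) t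
            * (indP (fun i => part i = j'.1) - indP (fun i => part i = j0)) t))
          = (M : ℝ) * (∑ j : {j : Fin c // j ≠ j0}, a (Sum.inr (Sum.inr j)))
            + (M : ℝ) * a (Sum.inr (Sum.inr j')) := by
        have hterm : ∀ j : {j : Fin c // j ≠ j0}, a (Sum.inr (Sum.inr j)) *
            (∑ t, (indP (fun i => part i = j.1) - indP (fun i => part i = j0)) t
              * (indP (fun i => part i = j'.1) - indP (fun i => part i = j0)) t)
            = (M : ℝ) * a (Sum.inr (Sum.inr j))
              + (if j = j' then (M : ℝ) * a (Sum.inr (Sum.inr j)) else 0) := by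
          intro j
          rw [dot_sub, dPP, dPP, dPP, dPP]
          rw [if_neg (show ¬ ((j : Fin c) = j0) from j.2),
            if_neg (show ¬ (j0 = (j' : Fin c)) from fun h => j'.2 h.symm),
            if_pos (show j0 = j0 from rfl)]
          by_cases h : j = j'
          · have h1 : j.1 = j'.1 := congrArg _ h
            rw [if_pos h1, if_pos h]
            ring
          · have h1 : j.1 ≠ j'.1 := fun hh => h (Subtype.ext hh)
            rw [if_neg h1, if_neg h]
            ring
        simp_rw [hterm]
        rw [Finset.sum_add_distrib, ← Finset.mul_sum,
          Fintype.sum_ite_eq' j' (fun j => (M : ℝ) * a (Sum.inr (Sum.inr j)))]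
      rw [eA, eB, eC] at hrel
      linarith
    intro i
    rcases i with x | y | j
    · exact key1 x
    · exact key2 y
    · exact key3 j
  -- conclude
  have hcard := hli.fintype_card_le_finrank
  rw [Module.finrank_fin_fun] at hcard
  have hcards : Fintype.card (Fin v1 ⊕ ({y : Fin v2 // y ≠ y0} ⊕ {j : Fin c // j ≠ j0}))
      = v1 + ((v2 - 1) + (c - 1)) := by
    rw [Fintype.card_sum, Fintype.card_sum, Fintype.card_fin]
    congr 1
    congr 1
    · rw [Fintype.card_subtype_compl, Fintype.card_subtype_eq, Fintype.card_fin]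
    · rw [Fintype.card_subtype_compl, Fintype.card_subtype_eq, Fintype.card_fin]
  rw [hcards] at hcard
  omega
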